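/- Let W be a split real quadratic space of signature (n,n), E and F transverse Lagrangian subspaces of W, with bases e₁,…,eₙ of E and f¹,…,fⁿ of F satisfying B(e_i, f^j) = δ_i^j. Then the element p = ∏_{i=1}^n e_i f^i of the Clifford algebra satisfies: p² = p, E·p = 0 (i.e. e·p = 0 for all e ∈ E), p·F = 0, and p − 1 ∈ Cl(W)·E. -/

import Mathlib

section Aux
variable {M : Type*} [Ring M]

private lemma list_prod_idem : ∀ (l : List M), (∀ u ∈ l, ∀ v ∈ l, Commute u v) →
    (∀ u ∈ l, u * u = u) → l.prod * l.prod = l.prod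
  | [], _, _ => by simp
  | c :: t, hc, hi => by
    have hct : Commute c t.prod :=
      Commute.list_prod_right _ _ fun y hy => hc c (by simp) y (by simp [hy])
    have ih := list_prod_idem t (fun u hu v hv => hc u (by simp [hu]) v (by simp [hv]))
      (fun u hu => hi u (by simp [hu]))
    have hcc := hi c (by simp)
    simp only [List.prod_cons]
    calc c * t.prod * (c * t.prod) = c * (t.prod * c) * t.prod := by noncomm_ring
      _ = c * (c * t.prod) * t.prod := by rw [hct.eq]
      _ = (c * c) * (t.prod * t.prod) := by noncomm_ring
      _ = c * t.prod := by rw [hcc, ih]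

private lemma kill_left {ι : Type*} (a : M) (x : ι → M) (j : ι)
    (hcomm : ∀ i, i ≠ j → a * x i = x i * a) (hj : a * x j = 0) :
    ∀ l : List ι, j ∈ l → a * (l.map x).prod = 0
  | [], h => absurd h (by simp)
  | i :: t, h => by
    by_cases hij : i = j
    · subst hij
      simp only [List.map_cons, List.prod_cons, ← mul_assoc, hj, zero_mul]
    · have hjt : j ∈ t := by
        rcases List.mem_cons.1 h with h | h
        · exact absurd h.symm hij
        · exact h
      have ih := kill_left a x j hcomm hj t hjt
      simp only [List.map_cons, List.prod_cons, ← mul_assoc, hcomm i hij]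
      rw [mul_assoc, ih, mul_zero]

private lemma kill_right {ι : Type*} (b : M) (x : ι → M) (j : ι)
    (hcomm : ∀ i, i ≠ j → b * x i = x i * b) (hj : x j * b = 0) :
    ∀ l : List ι, j ∈ l → (l.map x).prod * b = 0
  | [], h => absurd h (by simp)
  | i :: t, h => by
    simp only [List.map_cons, List.prod_cons, mul_assoc]
    by_cases hjt : j ∈ t
    · rw [kill_right b x j hcomm hj t hjt, mul_zero]
    · have hij : i = j := by
        rcases List.mem_cons.1 h with h | h
        · exact h.symm
        · exact absurd h hjt
      subst hij
      have hbt : Commute b (t.map x).prod := by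
        refine Commute.list_prod_right _ _ fun y hy => ?_
        rcases List.mem_map.1 hy with ⟨k, hk, rfl⟩
        exact hcomm k (fun hkj => hjt (hkj ▸ hk))
      rw [← hbt.eq, ← mul_assoc, hj, zero_mul]

private lemma prod_sub_one_mem (I : Submodule M M) :
    ∀ l : List M, (∀ u ∈ l, u - 1 ∈ I) → l.prod - 1 ∈ I
  | [], _ => by simp
  | c :: t, h => by
    have ih := prod_sub_one_mem I t (fun u hu => h u (by simp [hu]))
    have hc := h c (by simp)
    have key : c * t.prod - 1 = c • (t.prod - 1) + (c - 1) := by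
      simp [smul_eq_mul, mul_sub]
    simp only [List.prod_cons, key]
    exact I.add_mem (I.smul_mem c ih) hc

private theorem main_aux (n : ℕ) (a b : Fin n → M)
    (haa0 : ∀ i, a i * a i = 0) (hbb0 : ∀ i, b i * b i = 0)
    (haa : ∀ i j, a i * a j + a j * a i = 0)
    (hbb : ∀ i j, b i * b j + b j * b i = 0)
    (hab : ∀ i j, a i * b j + b j * a i = if i = j then (1 : M) else 0)
    (I : Submodule M M) (haI : ∀ i, a i ∈ I)
    (p : M) (hp : p = (List.ofFn (fun i => a i * b i)).prod) :
    p * p = p ∧ (∀ j, a j * p = 0) ∧ (∀ j, p * b j = 0) ∧ p - 1 ∈ I := by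
  have haa' : ∀ i j, a i * a j = - (a j * a i) := fun i j =>
    eq_neg_of_add_eq_zero_left (haa i j)
  have hbb' : ∀ i j, b i * b j = - (b j * b i) := fun i j =>
    eq_neg_of_add_eq_zero_left (hbb i j)
  have hab_ne : ∀ i j, i ≠ j → a i * b j = - (b j * a i) := by
    intro i j hij
    apply eq_neg_of_add_eq_zero_left
    rw [hab i j, if_neg hij]
  have hab_eq : ∀ i, a i * b i + b i * a i = 1 := by
    intro i
    rw [hab i i, if_pos rfl]
  set x : Fin n → M := fun i => a i * b i with hx
  have hxx : ∀ i, x i * x i = x i := by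
    intro i
    have h1 : b i * a i = 1 - a i * b i := eq_sub_of_add_eq' (hab_eq i)
    show a i * b i * (a i * b i) = a i * b i
    calc a i * b i * (a i * b i) = a i * (b i * a i) * b i := by noncomm_ring
      _ = a i * (1 - a i * b i) * b i := by rw [h1]
      _ = a i * b i - (a i * a i) * (b i * b i) := by noncomm_ring
      _ = a i * b i := by rw [haa0 i, zero_mul, sub_zero]
  have hax : ∀ i j, i ≠ j → a j * x i = x i * a j := by
    intro i j hij
    show a j * (a i * b i) = (a i * b i) * a j
    calc a j * (a i * b i) = (a j * a i) * b i := by noncomm_ring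
      _ = - (a i * a j) * b i := by rw [haa' j i]
      _ = - (a i * (a j * b i)) := by noncomm_ring
      _ = - (a i * (- (b i * a j))) := by rw [hab_ne j i (fun h => hij h.symm)]
      _ = (a i * b i) * a j := by noncomm_ring
  have hbx : ∀ i j, i ≠ j → b j * x i = x i * b j := by
    intro i j hij
    have h2 : a i * b j = - (b j * a i) := hab_ne i j hij
    show b j * (a i * b i) = (a i * b i) * b j
    calc b j * (a i * b i) = (b j * a i) * b i := by noncomm_ring
      _ = - (a i * b j) * b i := by rw [h2]; noncomm_ring
      _ = - (a i * (b j * b i)) := by noncomm_ring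
      _ = - (a i * (- (b i * b j))) := by rw [hbb' j i]
      _ = (a i * b i) * b j := by noncomm_ring
  have hcommx : ∀ i j, Commute (x i) (x j) := by
    intro i j
    rcases eq_or_ne i j with rfl | hij
    · exact Commute.refl _
    · have hij' : j ≠ i := fun h => hij h.symm
      have h1 : a i * x j = x j * a i := hax j i hij'
      have h2 : b i * x j = x j * b i := hbx j i hij'
      show x i * x j = x j * x i
      calc (a i * b i) * x j = a i * (b i * x j) := by noncomm_ring
        _ = a i * (x j * b i) := by rw [h2]
        _ = (a i * x j) * b i := by noncomm_ring
        _ = (x j * a i) * b i := by rw [h1]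
        _ = x j * (a i * b i) := by noncomm_ring
  have haxj : ∀ j, a j * x j = 0 := by
    intro j
    show a j * (a j * b j) = 0
    rw [← mul_assoc, haa0 j, zero_mul]
  have hxbj : ∀ j, x j * b j = 0 := by
    intro j
    show (a j * b j) * b j = 0
    rw [mul_assoc, hbb0 j, mul_zero]
  have hp' : p = ((List.finRange n).map x).prod := by
    rw [hp, List.ofFn_eq_map]
  refine ⟨?_, ?_, ?_, ?_⟩
  · rw [hp]
    apply list_prod_idem
    · intro u hu v hv
      rcases List.mem_ofFn.1 hu with ⟨i, rfl⟩
      rcases List.mem_ofFn.1 hv with ⟨j, rfl⟩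
      exact hcommx i j
    · intro u hu
      rcases List.mem_ofFn.1 hu with ⟨i, rfl⟩
      exact hxx i
  · intro j
    rw [hp']
    exact kill_left (a j) x j (fun i hij => hax i j hij) (haxj j) _ (by simp)
  · intro j
    rw [hp']
    exact kill_right (b j) x j (fun i hij => hbx i j hij) (hxbj j) _ (by simp)
  · rw [hp]
    apply prod_sub_one_mem
    intro u hu
    rcases List.mem_ofFn.1 hu with ⟨i, rfl⟩
    have h1 : (a i * b i - 1) + b i * a i = 0 := by
      rw [sub_add_eq_add_sub, hab_eq i, sub_self]
    have h2 : a i * b i - 1 = (- b i) • a i := by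
      rw [smul_eq_mul, neg_mul]
      exact eq_neg_of_add_eq_zero_left h1
    show a i * b i - 1 ∈ I
    rw [h2]
    exact I.smul_mem _ (haI i)

end Aux

/-- Let `(W,B)` be a split real quadratic space with transverse Lagrangian
subspaces `E = span(e₁,…,eₙ)` and `F = span(f¹,…,fⁿ)` where `B(eᵢ,eⱼ) = 0`,
`B(fⁱ,fʲ) = 0` and `B(eᵢ,fʲ) = δᵢʲ`.  Then `p = ∏ᵢ eᵢ fⁱ ∈ Cl(W)` satisfies
`p² = p`, `E·p = 0`, `p·F = 0` and `p − 1 ∈ Cl(W)·E`.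
(Clifford convention: `Q = (1/2) • B`, so `w₁w₂ + w₂w₁ = B(w₁,w₂)·1`.) -/
theorem stmt12 {W : Type*} [AddCommGroup W] [Module ℝ W] [FiniteDimensional ℝ W]
    (B : LinearMap.BilinForm ℝ W) (hsymm : B.IsSymm) (hnd : B.Nondegenerate)
    (n : ℕ) (e f : Fin n → W)
    (he : LinearIndependent ℝ e) (hf : LinearIndependent ℝ f)
    (hspan : Submodule.span ℝ (Set.range e) ⊔ Submodule.span ℝ (Set.range f) = ⊤)
    (hee : ∀ i j, B (e i) (e j) = 0)
    (hff : ∀ i j, B (f i) (f j) = 0)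
    (hef : ∀ i j, B (e i) (f j) = if i = j then (1 : ℝ) else 0)
    (p : CliffordAlgebra (((1/2 : ℝ) • B).toQuadraticMap))
    (hp : p = (List.ofFn (fun i : Fin n =>
        CliffordAlgebra.ι (((1/2 : ℝ) • B).toQuadraticMap) (e i) *
          CliffordAlgebra.ι (((1/2 : ℝ) • B).toQuadraticMap) (f i))).prod) :
    p * p = p ∧
    (∀ w ∈ Submodule.span ℝ (Set.range e),
        CliffordAlgebra.ι (((1/2 : ℝ) • B).toQuadraticMap) w * p = 0) ∧
    (∀ w ∈ Submodule.span ℝ (Set.range f),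
        p * CliffordAlgebra.ι (((1/2 : ℝ) • B).toQuadraticMap) w = 0) ∧
    p - 1 ∈ Submodule.span (CliffordAlgebra (((1/2 : ℝ) • B).toQuadraticMap))
        (CliffordAlgebra.ι (((1/2 : ℝ) • B).toQuadraticMap) ''
          ((Submodule.span ℝ (Set.range e) : Submodule ℝ W) : Set W)) := by
  let Q := ((1/2 : ℝ) • B).toQuadraticMap
  have hQapp : ∀ w, Q w = (1/2 : ℝ) * B w w := by
    intro w
    show ((1/2 : ℝ) • B).toQuadraticMap w = _
    rw [LinearMap.BilinMap.toQuadraticMap_apply]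
    simp [LinearMap.smul_apply, smul_eq_mul]
  have hrel : ∀ u v : W, CliffordAlgebra.ι Q u * CliffordAlgebra.ι Q v +
      CliffordAlgebra.ι Q v * CliffordAlgebra.ι Q u
        = algebraMap ℝ (CliffordAlgebra Q) (B u v) := by
    intro u v
    rw [CliffordAlgebra.ι_mul_ι_add_swap]
    congr 1
    show QuadraticMap.polar (((1/2 : ℝ) • B).toQuadraticMap) u v = B u v
    rw [LinearMap.BilinMap.polar_toQuadraticMap]
    have h : (RingHom.id ℝ) (B u v) = B v u := hsymm.eq u v
    simp only [RingHom.id_apply] at h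
    simp only [LinearMap.smul_apply, smul_eq_mul]
    rw [← h]
    ring
  set a : Fin n → CliffordAlgebra Q := fun i => CliffordAlgebra.ι Q (e i) with ha
  set b : Fin n → CliffordAlgebra Q := fun i => CliffordAlgebra.ι Q (f i) with hb
  have haa0 : ∀ i, a i * a i = 0 := by
    intro i
    rw [ha]
    show CliffordAlgebra.ι Q (e i) * CliffordAlgebra.ι Q (e i) = 0
    rw [CliffordAlgebra.ι_sq_scalar, hQapp, hee i i, mul_zero, map_zero]
  have hbb0 : ∀ i, b i * b i = 0 := by
    intro i
    show CliffordAlgebra.ι Q (f i) * CliffordAlgebra.ι Q (f i) = 0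
    rw [CliffordAlgebra.ι_sq_scalar, hQapp, hff i i, mul_zero, map_zero]
  have haa : ∀ i j, a i * a j + a j * a i = 0 := by
    intro i j
    show CliffordAlgebra.ι Q (e i) * CliffordAlgebra.ι Q (e j) + _ = 0
    rw [hrel (e i) (e j), hee i j, map_zero]
  have hbb : ∀ i j, b i * b j + b j * b i = 0 := by
    intro i j
    show CliffordAlgebra.ι Q (f i) * CliffordAlgebra.ι Q (f j) + _ = 0
    rw [hrel (f i) (f j), hff i j, map_zero]
  have hab : ∀ i j, a i * b j + b j * a i =
      if i = j then (1 : CliffordAlgebra Q) else 0 := by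
    intro i j
    show CliffordAlgebra.ι Q (e i) * CliffordAlgebra.ι Q (f j) + _ = _
    rw [hrel (e i) (f j), hef i j]
    split_ifs <;> simp
  set I := Submodule.span (CliffordAlgebra Q)
      (CliffordAlgebra.ι Q '' ((Submodule.span ℝ (Set.range e) : Submodule ℝ W) : Set W))
    with hI
  have haI : ∀ i, a i ∈ I :=
    fun i => Submodule.subset_span ⟨e i, Submodule.subset_span ⟨i, rfl⟩, rfl⟩
  obtain ⟨h1, h2, h3, h4⟩ := main_aux n a b haa0 hbb0 haa hbb hab I haI p hp
  refine ⟨h1, ?_, ?_, h4⟩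
  · intro w hw
    induction hw using Submodule.span_induction with
    | mem w hw =>
      rcases hw with ⟨j, rfl⟩
      exact h2 j
    | zero => rw [map_zero, zero_mul]
    | add u v _ _ hu hv =>
      rw [map_add, add_mul, hu, hv, add_zero]
    | smul c u _ hu =>
      rw [map_smul, smul_mul_assoc, hu, smul_zero]
  · intro w hw
    induction hw using Submodule.span_induction with
    | mem w hw =>
      rcases hw with ⟨j, rfl⟩
      exact h3 j
    | zero => rw [map_zero, mul_zero]
    | add u v _ _ hu hv =>
      rw [map_add, mul_add, hu, hv, add_zero]
    | smul c u _ hu =>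
      rw [map_smul, mul_smul_comm, hu, smul_zero]
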